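/- Let A be a field of characteristic zero, B a finite-dimensional commutative A-algebra all of whose residue fields are A, L an algebraically closed field extension of A, F a subfield of L containing A, F' = {x ∈ L : x is algebraic over F}, and e : F → L ⊗[A] B an A-algebra homomorphism. For each A-algebra homomorphism ρ : B → A set σ_ρ := ρ^L ∘ e : F → L. Suppose that for each A-algebra homomorphism ρ : B → A we are given an A-algebra homomorphism σ'_ρ : F' → L extending σ_ρ. Then there exists exactly one A-algebra homomorphism e' : F' → L ⊗[A] B extending e such that ρ^L ∘ e' = σ'_ρ for every A-algebra homomorphism ρ : B → A. -/

import Mathlib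

/-- For an `A`-algebra homomorphism `ρ : B →ₐ[A] A`, the induced `A`-algebra homomorphism
`ρ^L : L ⊗[A] B → L`, determined by `l ⊗ b ↦ l • ρ b`. -/
noncomputable def rhoHom (A L B : Type*) [CommSemiring A] [CommRing L] [Algebra A L]
    [CommRing B] [Algebra A B] (ρ : B →ₐ[A] A) : TensorProduct A L B →ₐ[A] L :=
  (Algebra.TensorProduct.rid A A L).toAlgHom.comp
    (Algebra.TensorProduct.map (AlgHom.id A L) ρ)

universe u v w

set_option maxHeartbeats 2000000 in
theorem aux_main
    {A : Type u} {B : Type v} {L : Type w} [Field A] [CharZero A] [CommRing B] [Algebra A B]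
    [FiniteDimensional A B]
    (hres : ∀ m : Ideal B, m.IsMaximal → Function.Bijective (algebraMap A (B ⧸ m)))
    [Field L] [Algebra A L] [IsAlgClosed L]
    (F : IntermediateField A L)
    (F' : Subalgebra A L) (hF' : ∀ x : L, x ∈ F' ↔ IsAlgebraic F x)
    (e : F →ₐ[A] TensorProduct A L B)
    (σ' : (B →ₐ[A] A) → (F' →ₐ[A] L))
    (hσ' : ∀ (ρ : B →ₐ[A] A) (x : F) (hx : (x : L) ∈ F'),
      σ' ρ ⟨(x : L), hx⟩ = rhoHom A L B ρ (e x)) :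
    ∃! e' : F' →ₐ[A] TensorProduct A L B,
      (∀ (x : F) (hx : (x : L) ∈ F'), e' ⟨(x : L), hx⟩ = e x) ∧
      ∀ ρ : B →ₐ[A] A, (rhoHom A L B ρ).comp e' = σ' ρ := by
  classical
  set R := TensorProduct A L B with hRdef
  haveI : IsArtinianRing B := IsArtinianRing.of_finite A B
  haveI : Module.Finite L R := Module.Finite.base_change A L B
  haveI : IsArtinianRing R := IsArtinianRing.of_finite L R
  -- the `L`-algebra version of `rhoHom`
  let ρL : (B →ₐ[A] A) → (R →ₐ[L] L) := fun ρ =>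
    Algebra.TensorProduct.lift (AlgHom.id L L) ((Algebra.ofId A L).comp ρ)
      fun _ _ => Commute.all _ _
  have hρL : ∀ (ρ) (x : R), ρL ρ x = rhoHom A L B ρ x := by
    intro ρ
    have h : ((ρL ρ).restrictScalars A) = rhoHom A L B ρ := by
      apply Algebra.TensorProduct.ext'
      intro l b
      simp [ρL, rhoHom, Algebra.smul_def, mul_comm, Algebra.ofId_apply]
    intro x
    exact congrArg (fun f => f x) (congrArg (fun f => f.toFun) h)
  have hρLtmul : ∀ (ρ) (l : L) (b : B), ρL ρ (l ⊗ₜ[A] b) = l * algebraMap A L (ρ b) := by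
    intro ρ l b
    rw [show ρL ρ = Algebra.TensorProduct.lift (AlgHom.id L L) ((Algebra.ofId A L).comp ρ)
      (fun _ _ => Commute.all _ _) from rfl, Algebra.TensorProduct.lift_tmul]
    simp [Algebra.ofId_apply]
  have hρLsurj : ∀ ρ, Function.Surjective (ρL ρ) :=
    fun ρ l => ⟨algebraMap L R l, (ρL ρ).commutes l⟩
  have hker : ∀ ρ, (RingHom.ker (ρL ρ)).IsMaximal :=
    fun ρ => RingHom.ker_isMaximal_of_surjective _ (hρLsurj ρ)
  -- every maximal ideal of `R` is the kernel of some `ρL ρ`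
  have maxToRho : ∀ M : Ideal R, M.IsMaximal → ∃ ρ, RingHom.ker (ρL ρ) = M := by
    intro M hM
    letI := Ideal.Quotient.field M
    haveI : Module.Finite L (R ⧸ M) :=
      Module.Finite.of_surjective (Ideal.Quotient.mkₐ L M).toLinearMap
        Ideal.Quotient.mk_surjective
    haveI : Algebra.IsIntegral L (R ⧸ M) := Algebra.IsIntegral.of_finite L _
    have hbij : Function.Bijective (algebraMap L (R ⧸ M)) :=
      ⟨(algebraMap L (R ⧸ M)).injective, IsAlgClosed.algebraMap_bijective_of_isIntegral.2⟩
    let ε := AlgEquiv.ofBijective (Algebra.ofId L (R ⧸ M)) hbij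
    let φ : R →ₐ[L] L := ε.symm.toAlgHom.comp (Ideal.Quotient.mkₐ L M)
    have hφ : ∀ x : R, φ x = ε.symm (Ideal.Quotient.mk M x) := fun _ => rfl
    have hφker : RingHom.ker φ = M := by
      ext x
      rw [RingHom.mem_ker, hφ, ← Ideal.Quotient.eq_zero_iff_mem (I := M)]
      constructor
      · intro h
        have := congrArg ε h
        rwa [AlgEquiv.apply_symm_apply, map_zero] at this
      · intro h; rw [h, map_zero]
    let ψ : B →ₐ[A] L := (φ.restrictScalars A).comp
      (Algebra.TensorProduct.includeRight : B →ₐ[A] R)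
    have hmker : (RingHom.ker ψ).IsMaximal := by
      rw [← IsArtinianRing.isPrime_iff_isMaximal]
      exact RingHom.ker_isPrime _
    let η := AlgEquiv.ofBijective (Algebra.ofId A (B ⧸ RingHom.ker ψ)) (hres _ hmker)
    let ρ : B →ₐ[A] A := η.symm.toAlgHom.comp (Ideal.Quotient.mkₐ A (RingHom.ker ψ))
    have hψρ : ∀ b, algebraMap A L (ρ b) = ψ b := by
      intro b
      have h1 : η (ρ b) = Ideal.Quotient.mk (RingHom.ker ψ) b :=
        η.apply_symm_apply _
      have h2 : (Ideal.kerLiftAlg ψ) (η (ρ b)) = algebraMap A L (ρ b) := by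
        have : η (ρ b) = algebraMap A (B ⧸ RingHom.ker ψ) (ρ b) := rfl
        rw [this, AlgHom.commutes]
      rw [← h2, h1, Ideal.kerLiftAlg_mk]
    have hincl : ∀ l : L, (Algebra.TensorProduct.includeLeft : L →ₐ[L] R) l
        = algebraMap L R l := fun _ => rfl
    have hφρ : (ρL ρ) = φ := by
      apply Algebra.TensorProduct.ext
      · apply AlgHom.ext; intro l
        simp only [AlgHom.comp_apply, hincl, AlgHom.commutes]
        exact ((ρL ρ).commutes l).trans (φ.commutes l).symm
      · apply AlgHom.ext; intro b
        have h1 : (ρL ρ) ((1 : L) ⊗ₜ[A] b) = algebraMap A L (ρ b) := by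
          rw [hρLtmul, one_mul]
        have h2 : φ ((1 : L) ⊗ₜ[A] b) = ψ b := rfl
        show (ρL ρ) ((1 : L) ⊗ₜ[A] b) = φ ((1 : L) ⊗ₜ[A] b)
        rw [h1, h2, hψρ b]
    exact ⟨ρ, by rw [hφρ]; exact hφker⟩
  -- injectivity of `ρ ↦ ker (ρL ρ)`
  have kerinj : ∀ ρ₁ ρ₂, RingHom.ker (ρL ρ₁) = RingHom.ker (ρL ρ₂) → ρ₁ = ρ₂ := by
    intro ρ₁ ρ₂ h
    have hfun : ρL ρ₁ = ρL ρ₂ := by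
      apply AlgHom.ext; intro x
      have hx : x - algebraMap L R (ρL ρ₂ x) ∈ RingHom.ker (ρL ρ₂) := by
        simp only [RingHom.mem_ker, map_sub, AlgHom.commutes, Algebra.algebraMap_self_apply, sub_self]
      rw [← h, RingHom.mem_ker, map_sub, AlgHom.commutes, Algebra.algebraMap_self_apply,
        sub_eq_zero] at hx
      exact hx
    apply AlgHom.ext; intro b
    apply (algebraMap A L).injective
    have h2 := AlgHom.congr_fun hfun ((1 : L) ⊗ₜ[A] b)
    rw [hρLtmul, hρLtmul, one_mul, one_mul] at h2
    exact h2
  haveI : Finite (B →ₐ[A] A) := by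
    haveI := (IsArtinianRing.setOfPred_isMaximal_finite R).to_subtype
    exact Finite.of_injective
      (fun ρ : B →ₐ[A] A =>
        (⟨RingHom.ker (ρL ρ), hker ρ⟩ : {I : Ideal R | I.IsMaximal}))
      (fun ρ₁ ρ₂ h => kerinj _ _ (congrArg Subtype.val h))
  -- the product map π
  let C := (B →ₐ[A] A) → L
  let π : R →ₐ[L] C := Pi.algHom _ _ fun ρ => ρL ρ
  have hπ : ∀ (x : R) (ρ), π x ρ = ρL ρ x := fun _ _ => rfl
  -- kernel of π is nilpotent
  have hnil : IsNilpotent (RingHom.ker (π : R →ₐ[L] C)) := by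
    obtain ⟨n, hn⟩ := IsArtinianRing.isNilpotent_jacobson_bot (R := R)
    refine ⟨n, ?_⟩
    have hle : RingHom.ker (π : R →ₐ[L] C) ≤ Ideal.jacobson ⊥ := by
      intro x hx
      rw [Ideal.jacobson, Submodule.mem_sInf]
      rintro J ⟨-, hJ⟩
      obtain ⟨ρ, rfl⟩ := maxToRho J hJ
      rw [RingHom.mem_ker] at hx ⊢
      rw [← hπ x ρ, hx]; rfl
    have hpow : ∀ m : ℕ, RingHom.ker (π : R →ₐ[L] C) ^ m ≤ (Ideal.jacobson ⊥) ^ m := by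
      intro m
      induction m with
      | zero => simp
      | succ k ih => rw [pow_succ, pow_succ]; exact Ideal.mul_mono ih hle
    have h := hpow n
    rw [hn] at h
    exact le_bot_iff.mp h
  -- π is surjective
  have hπsurj : Function.Surjective (π : R →ₐ[L] C) := by
    intro x
    have hco : Pairwise (Function.onFun IsCoprime fun ρ => RingHom.ker (ρL ρ)) := by
      intro ρ₁ ρ₂ hne
      exact Ideal.isCoprime_iff_sup_eq.mpr
        (Ideal.IsMaximal.coprime_of_ne (hker ρ₁) (hker ρ₂)
          fun hc => hne (kerinj _ _ hc))
    obtain ⟨y, hy⟩ := Ideal.quotientInfToPiQuotient_surj hco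
      (fun ρ => (Ideal.quotientKerAlgEquivOfSurjective (hρLsurj ρ)).symm (x ρ))
    obtain ⟨z, rfl⟩ := Ideal.Quotient.mk_surjective y
    refine ⟨z, funext fun ρ => ?_⟩
    have h1 := congrFun hy ρ
    rw [Ideal.quotientInfToPiQuotient_mk'] at h1
    have h2 := congrArg (Ideal.quotientKerAlgEquivOfSurjective (hρLsurj ρ)) h1
    rw [AlgEquiv.apply_symm_apply] at h2
    have h3 : (Ideal.quotientKerAlgEquivOfSurjective (hρLsurj ρ))
        (Ideal.Quotient.mk (RingHom.ker (ρL ρ)) z) = ρL ρ z := by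
      exact Ideal.quotientKerAlgEquivOfSurjective_mk _ z
    rw [h3] at h2
    exact h2
  -- a small copy of the base field `F`
  let K : Type w := Shrink.{w} (↥F)
  let κ : K ≃ₐ[A] ↥F := (Shrink.algEquiv A (↥F))
  have hFsub : ∀ x : F, (x : L) ∈ F' := fun x =>
    (hF' _).2 (IntermediateField.algebraMap_apply F x ▸ isAlgebraic_algebraMap x)
  let incl : F →ₐ[A] F' := (F.val).codRestrict F' (fun x => hFsub x)
  have hincl : ∀ x : F, incl x = ⟨(x : L), hFsub x⟩ := fun x => rfl
  let inclK : K →ₐ[A] F' := incl.comp κ.toAlgHom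
  let eK : K →ₐ[A] R := e.comp κ.toAlgHom
  letI : Algebra K F' := inclK.toRingHom.toAlgebra
  letI : Algebra K R := eK.toRingHom.toAlgebra
  haveI : IsScalarTower A K F' := IsScalarTower.of_algebraMap_eq fun a => (inclK.commutes a).symm
  haveI : IsScalarTower A K R := IsScalarTower.of_algebraMap_eq fun a => (eK.commutes a).symm
  have halgKF' : ∀ y : K, algebraMap K F' y = incl (κ y) := fun y => rfl
  have halgKR : ∀ y : K, algebraMap K R y = e (κ y) := fun y => rfl
  -- `F'` is a field
  have hFieldF' : IsField F' := by
    refine ⟨⟨0, 1, fun h => zero_ne_one (α := L) (congrArg Subtype.val h)⟩, mul_comm, ?_⟩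
    intro a ha
    have hne : (a : L) ≠ 0 := fun h => ha (Subtype.ext h)
    have hmem : (a : L)⁻¹ ∈ F' := (hF' _).2 (IsAlgebraic.inv ((hF' _).1 a.2))
    exact ⟨⟨(a : L)⁻¹, hmem⟩, Subtype.ext (mul_inv_cancel₀ hne)⟩
  letI : Field F' := hFieldF'.toField
  -- `F'` is algebraic over `K`
  haveI : Algebra.IsAlgebraic K F' := by
    constructor
    intro x
    obtain ⟨q, hq0, hq⟩ := (hF' _).1 x.2
    have hinj : Function.Injective ((κ.symm : ↥F ≃+* K) : ↥F →+* K) := κ.symm.injective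
    refine ⟨q.map ((κ.symm : ↥F ≃+* K) : ↥F →+* K), ?_, ?_⟩
    · exact (Polynomial.map_ne_zero_iff hinj).mpr hq0
    · have hcomp : (algebraMap K F').comp ((κ.symm : ↥F ≃+* K) : ↥F →+* K)
          = incl.toRingHom := RingHom.ext fun y => by
        show incl (κ (κ.symm y)) = incl y
        rw [AlgEquiv.apply_symm_apply]
    
      have h1 : Polynomial.aeval x (q.map ((κ.symm : ↥F ≃+* K) : ↥F →+* K))
          = Polynomial.eval₂ incl.toRingHom x q := by
        rw [Polynomial.aeval_def, Polynomial.eval₂_map, hcomp]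
      have hcomp2 : (F'.val.toRingHom).comp incl.toRingHom = algebraMap (↥F) L :=
        RingHom.ext fun y => (IntermediateField.algebraMap_apply F y).symm
      have h2 : F'.val.toRingHom (Polynomial.eval₂ incl.toRingHom x q) = 0 := by
        rw [Polynomial.hom_eval₂, hcomp2, ← Polynomial.aeval_def]
        exact hq
      apply Subtype.val_injective
      rw [h1]
      exact h2
  haveI : CharZero K := charZero_of_injective_algebraMap (algebraMap A K).injective
  haveI : Algebra.IsSeparable K F' :=
    ⟨fun x =>
      (minpoly.irreducible (Algebra.IsAlgebraic.isAlgebraic (R := K) x).isIntegral).separable⟩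
  haveI : Algebra.FormallyEtale K F' := Algebra.FormallyEtale.of_isSeparable K F'
  -- shrink `R` to the universe of `L`
  haveI : Small.{w} R := small_of_injective (Module.finBasis L R).equivFun.injective
  let ι : Shrink.{w} R ≃ₐ[A] R := (Shrink.algEquiv A R)
  letI : Algebra K (Shrink.{w} R) := ((ι.symm.toAlgHom.comp eK).toRingHom).toAlgebra
  let ιK : Shrink.{w} R ≃ₐ[K] R := { ι with commutes' := fun f => ι.apply_symm_apply (eK f) }
  letI : Algebra K C := (π.toRingHom.comp eK.toRingHom).toAlgebra
  let πK : R →ₐ[K] C := { π.toRingHom with commutes' := fun f => rfl }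
  let π0 : Shrink.{w} R →ₐ[K] C := πK.comp ιK.toAlgHom
  have hπ0 : ∀ x : Shrink.{w} R, π0 x = π (ιK x) := fun _ => rfl
  have hπ0surj : Function.Surjective π0 := by
    intro c
    obtain ⟨r, hr⟩ := hπsurj c
    exact ⟨ιK.symm r, by rw [hπ0, AlgEquiv.apply_symm_apply]; exact hr⟩
  have hnil0 : IsNilpotent (RingHom.ker (π0 : Shrink.{w} R →ₐ[K] C)) := by
    obtain ⟨n, hn⟩ := hnil
    refine ⟨n, ?_⟩
    have hcomap : RingHom.ker (π0 : Shrink.{w} R →ₐ[K] C)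
        = Ideal.comap (ιK.toAlgHom : Shrink.{w} R →ₐ[K] R)
            (RingHom.ker (π : R →ₐ[L] C)) := by
      ext x
      simp only [RingHom.mem_ker, Ideal.mem_comap, hπ0]
      rfl
    rw [hcomap]
    refine le_bot_iff.mp (le_trans (Ideal.le_comap_pow _ n) ?_)
    rw [hn]
    intro x hx
    have h2 : ιK x ∈ (⊥ : Ideal R) := hx
    rw [Ideal.mem_bot] at h2
    rw [Ideal.mem_bot]
    exact ιK.injective (h2.trans (map_zero ιK).symm)
  let εQ := Ideal.quotientKerAlgEquivOfSurjective hπ0surj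
  let τA : F' →ₐ[A] C := Pi.algHom _ _ fun ρ => σ' ρ
  let τ : F' →ₐ[K] C :=
    { τA.toRingHom with
      commutes' := fun f => funext fun ρ => by
        show σ' ρ ⟨((κ f : F) : L), hFsub (κ f)⟩ = ρL ρ (e (κ f))
        rw [hσ' ρ (κ f) (hFsub (κ f))]
        exact (hρL ρ (e (κ f))).symm }
  have hτ : ∀ (x : F') (ρ), τ x ρ = σ' ρ x := fun _ _ => rfl
  let g : F' →ₐ[K] (Shrink.{w} R ⧸ RingHom.ker (π0 : Shrink.{w} R →ₐ[K] C)) :=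
    εQ.symm.toAlgHom.comp τ
  let e'0 : F' →ₐ[K] Shrink.{w} R :=
    Algebra.FormallySmooth.lift (RingHom.ker (π0 : Shrink.{w} R →ₐ[K] C)) hnil0 g
  have hπ0e'0 : ∀ x : F', π0 (e'0 x) = τ x := by
    intro x
    have h1 : εQ (Ideal.Quotient.mk (RingHom.ker (π0 : Shrink.{w} R →ₐ[K] C)) (e'0 x))
        = π0 (e'0 x) := by
      exact Ideal.quotientKerAlgEquivOfSurjective_mk _ _
    rw [← h1, Algebra.FormallySmooth.mk_lift _ hnil0 g]
    show εQ (εQ.symm (τ x)) = τ x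
    exact εQ.apply_symm_apply _
  let e'K : F' →ₐ[K] R := (ιK.toAlgHom).comp e'0
  let e' : F' →ₐ[A] R := e'K.restrictScalars A
  have hkey : ∀ (x : F') (ρ), ρL ρ (e' x) = σ' ρ x := by
    intro x ρ
    have h1 : ρL ρ (e' x) = π0 (e'0 x) ρ := rfl
    rw [h1, hπ0e'0]
    exact hτ x ρ
  refine ⟨e', ⟨?_, ?_⟩, ?_⟩
  · intro x hx
    have hx2 : (⟨(x : L), hx⟩ : F') = algebraMap K F' (κ.symm x) := by
      rw [halgKF', AlgEquiv.apply_symm_apply, hincl]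
    rw [hx2]
    show e'K (algebraMap K F' (κ.symm x)) = e x
    rw [AlgHom.commutes, halgKR, AlgEquiv.apply_symm_apply]
  · intro ρ
    apply AlgHom.ext; intro x
    show rhoHom A L B ρ (e' x) = σ' ρ x
    rw [← hρL]
    exact hkey x ρ
  · rintro e'' ⟨h1, h2⟩
    let e''K : F' →ₐ[K] R :=
      { e''.toRingHom with commutes' := fun f => h1 (κ f) (hFsub (κ f)) }
    have h3 : πK.comp e''K = πK.comp e'K := by
      apply AlgHom.ext; intro x
      show π (e'' x) = π (e'K x)
      funext ρ
      have l1 : π (e'' x) ρ = σ' ρ x := by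
        rw [hπ, hρL]
        exact AlgHom.congr_fun (h2 ρ) x
      have l2 : π (e'K x) ρ = σ' ρ x := hkey x ρ
      rw [l1, l2]
    have h4 : π0.comp (ιK.symm.toAlgHom.comp e''K) = π0.comp (ιK.symm.toAlgHom.comp e'K) := by
      apply AlgHom.ext; intro x
      show π (ιK (ιK.symm (e''K x))) = π (ιK (ιK.symm (e'K x)))
      rw [AlgEquiv.apply_symm_apply, AlgEquiv.apply_symm_apply]
      exact AlgHom.congr_fun h3 x
    have h6 : ιK.symm.toAlgHom.comp e''K = ιK.symm.toAlgHom.comp e'K :=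
      Algebra.FormallyUnramified.lift_unique' π0 hnil0 _ _ h4
    apply AlgHom.ext; intro x
    show e''K x = e'K x
    exact ιK.symm.injective (AlgHom.congr_fun h6 x)

/-- Let `A` be a field of characteristic zero, `B` a finite-dimensional
commutative `A`-algebra all of whose residue fields are `A`, `L` an algebraically closed field
extension of `A`, `F` a subfield of `L` containing `A`, `F' = {x ∈ L : x algebraic over F}`,
and `e : F → L ⊗[A] B` an `A`-algebra homomorphism.  For each `ρ : B →ₐ[A] A` set
`σ_ρ := ρ^L ∘ e : F → L`, and suppose we are given `A`-algebra homomorphisms `σ'_ρ : F' → L`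
extending the `σ_ρ`.  Then there is exactly one `A`-algebra homomorphism `e' : F' → L ⊗[A] B`
extending `e` with `ρ^L ∘ e' = σ'_ρ` for every `ρ`. -/
theorem exists_unique_extension_with_prescribed_embeddings
    {A B L : Type*} [Field A] [CharZero A] [CommRing B] [Algebra A B]
    [FiniteDimensional A B]
    (hres : ∀ m : Ideal B, m.IsMaximal → Function.Bijective (algebraMap A (B ⧸ m)))
    [Field L] [Algebra A L] [IsAlgClosed L]
    (F : IntermediateField A L)
    (F' : Subalgebra A L) (hF' : ∀ x : L, x ∈ F' ↔ IsAlgebraic F x)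
    (e : F →ₐ[A] TensorProduct A L B)
    (σ' : (B →ₐ[A] A) → (F' →ₐ[A] L))
    (hσ' : ∀ (ρ : B →ₐ[A] A) (x : F) (hx : (x : L) ∈ F'),
      σ' ρ ⟨(x : L), hx⟩ = rhoHom A L B ρ (e x)) :
    ∃! e' : F' →ₐ[A] TensorProduct A L B,
      (∀ (x : F) (hx : (x : L) ∈ F'), e' ⟨(x : L), hx⟩ = e x) ∧
      ∀ ρ : B →ₐ[A] A, (rhoHom A L B ρ).comp e' = σ' ρ :=
  aux_main hres F F' hF' e σ' hσ'
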